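/- Let a ≥ b > 0. Then 2√(a² + b²)·E(a/√(a² + b²)) − (√(a² + b²) + a)·E( 2√(a·√(a² + b²)) / (a + √(a² + b²)) ) = (b²/√(a² + b²))·K(a/√(a² + b²)), where K(k) = ∫₀^{π/2} dθ/√(1 − k² sin²θ) and E(k) = ∫₀^{π/2} √(1 − k² sin²θ) dθ. -/

import Mathlib

open Real intervalIntegral Set

/-- Complete elliptic integral of the first kind. -/
noncomputable def ellipticK (k : ℝ) : ℝ :=
  ∫ θ in (0:ℝ)..(π / 2), 1 / Real.sqrt (1 - k ^ 2 * Real.sin θ ^ 2)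

/-- Complete elliptic integral of the second kind. -/
noncomputable def ellipticE (k : ℝ) : ℝ :=
  ∫ θ in (0:ℝ)..(π / 2), Real.sqrt (1 - k ^ 2 * Real.sin θ ^ 2)

section landen_aux
variable {k : ℝ}

lemma hDelta (hk0 : 0 ≤ k) (hk1 : k < 1) (θ : ℝ) : 0 < 1 - k ^ 2 * Real.sin θ ^ 2 := by
  nlinarith [Real.sin_sq_le_one θ, sq_nonneg (Real.sin θ), sq_nonneg k]

lemma hq (hk0 : 0 ≤ k) (θ : ℝ) : 0 < 1 + k * Real.sin θ ^ 2 := by positivity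

lemma hks (hk0 : 0 ≤ k) (hk1 : k < 1) (θ : ℝ) : 0 < 1 - k * Real.sin θ ^ 2 := by
  nlinarith [Real.sin_sq_le_one θ, sq_nonneg (Real.sin θ)]

lemma subst_E (hk0 : 0 ≤ k) (hk1 : k < 1) :
    ellipticE (2 * Real.sqrt k / (1 + k))
      = ∫ θ in (0:ℝ)..(π / 2),
          (1 + k) * (1 - k * Real.sin θ ^ 2) ^ 2 /
            ((1 + k * Real.sin θ ^ 2) ^ 2 * Real.sqrt (1 - k ^ 2 * Real.sin θ ^ 2)) := by
  have hπ : (0:ℝ) < π / 2 := by positivity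
  have hk1' : (0:ℝ) < 1 + k := by linarith
  set w : ℝ → ℝ := fun t => (1 + k) * Real.sin t / (1 + k * Real.sin t ^ 2) with hw_def
  set f' : ℝ → ℝ := fun t => (1 + k) * (1 - k * Real.sin t ^ 2) /
      ((1 + k * Real.sin t ^ 2) * Real.sqrt (1 - k ^ 2 * Real.sin t ^ 2)) with hf'_def
  set g : ℝ → ℝ := fun u => Real.sqrt (1 - (2 * Real.sqrt k / (1 + k)) ^ 2 * Real.sin u ^ 2)
    with hg_def
  have hΔc : Continuous fun t : ℝ => Real.sqrt (1 - k ^ 2 * Real.sin t ^ 2) :=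
    (continuous_const.sub (continuous_const.mul ((Real.continuous_sin).pow 2))).sqrt
  have hqc : Continuous fun t : ℝ => 1 + k * Real.sin t ^ 2 :=
    continuous_const.add (continuous_const.mul ((Real.continuous_sin).pow 2))
  have hwc : Continuous w :=
    (continuous_const.mul Real.continuous_sin).div hqc fun t => (hq hk0 t).ne'
  have hfc : Continuous fun t => Real.arcsin (w t) := Real.continuous_arcsin.comp hwc
  have hf'c : Continuous f' := by
    apply (continuous_const.mul
      (continuous_const.sub (continuous_const.mul ((Real.continuous_sin).pow 2)))).div
      (hqc.mul hΔc)
    intro t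
    exact (mul_pos (hq hk0 t) (Real.sqrt_pos.2 (hDelta hk0 hk1 t))).ne'
  have hgc : Continuous g :=
    (continuous_const.sub (continuous_const.mul ((Real.continuous_sin).pow 2))).sqrt
  -- derivative on the open interval
  have hff' : ∀ x ∈ Ioo (0:ℝ) (π / 2), HasDerivAt (fun t => Real.arcsin (w t)) (f' x) x := by
    intro x hx
    have hs0 : 0 < Real.sin x := Real.sin_pos_of_pos_of_lt_pi hx.1 (by linarith [Real.pi_pos, hx.2])
    have hs1 : Real.sin x < 1 := by
      have := Real.sin_lt_sin_of_lt_of_le_pi_div_two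
        (by linarith [Real.pi_pos, hx.1] : -(π/2) ≤ x) le_rfl hx.2
      simpa using this
    have hc0 : 0 < Real.cos x := Real.cos_pos_of_mem_Ioo ⟨by linarith [Real.pi_pos, hx.1], hx.2⟩
    have hqx := hq hk0 x
    have hΔx := hDelta hk0 hk1 x
    have hΔsx : 0 < Real.sqrt (1 - k ^ 2 * Real.sin x ^ 2) := Real.sqrt_pos.2 hΔx
    have hw1 : w x < 1 := by
      rw [hw_def]
      rw [div_lt_one hqx]
      have hks1 : k * Real.sin x < 1 :=
        lt_of_le_of_lt (mul_le_of_le_one_right hk0 hs1.le) hk1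
      nlinarith [mul_pos (sub_pos.2 hs1) (sub_pos.2 hks1)]
    have hw0 : 0 < w x := by
      rw [hw_def]; positivity
    -- derivative of w
    have hqd : HasDerivAt (fun t => 1 + k * Real.sin t ^ 2)
        (k * (2 * Real.sin x * Real.cos x)) x := by
      have := ((Real.hasDerivAt_sin x).pow 2).const_mul k
      simpa [mul_assoc, mul_comm, mul_left_comm] using this.const_add 1
    have hnd : HasDerivAt (fun t => (1 + k) * Real.sin t) ((1 + k) * Real.cos x) x :=
      (Real.hasDerivAt_sin x).const_mul _
    have hwd := hnd.div hqd hqx.ne'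
    have harc := (Real.hasDerivAt_arcsin (by linarith : w x ≠ -1) hw1.ne).comp x hwd
    refine HasDerivAt.congr_deriv harc ?_
    symm
    have hsq : Real.sqrt (1 - w x ^ 2)
        = Real.cos x * Real.sqrt (1 - k ^ 2 * Real.sin x ^ 2) / (1 + k * Real.sin x ^ 2) := by
      rw [show (1 : ℝ) - w x ^ 2
          = (Real.cos x * Real.sqrt (1 - k ^ 2 * Real.sin x ^ 2) / (1 + k * Real.sin x ^ 2)) ^ 2 by
        have hS2 : Real.sqrt (1 - k ^ 2 * Real.sin x ^ 2) ^ 2 = 1 - k ^ 2 * Real.sin x ^ 2 :=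
          Real.sq_sqrt hΔx.le
        have hc2 : Real.cos x ^ 2 = 1 - Real.sin x ^ 2 := Real.cos_sq' x
        rw [hw_def]
        field_simp
        nlinarith [hS2, hc2]]
      exact Real.sqrt_sq (by positivity)
    show (1 + k) * (1 - k * Real.sin x ^ 2) /
        ((1 + k * Real.sin x ^ 2) * Real.sqrt (1 - k ^ 2 * Real.sin x ^ 2)) = _
    rw [hsq]
    have hS2 : Real.sqrt (1 - k ^ 2 * Real.sin x ^ 2) ^ 2 = 1 - k ^ 2 * Real.sin x ^ 2 :=
      Real.sq_sqrt hΔx.le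
    field_simp
    ring_nf
  have key := integral_comp_smul_deriv'' (a := (0:ℝ)) (b := π / 2)
    (f := fun t => Real.arcsin (w t)) (f' := f') (g := g)
    hfc.continuousOn
    (by
      rw [min_eq_left hπ.le, max_eq_right hπ.le]
      exact fun x hx => (hff' x hx).hasDerivWithinAt)
    hf'c.continuousOn
    hgc.continuousOn
  have hφ0 : Real.arcsin (w 0) = 0 := by simp [hw_def]
  have hφ1 : Real.arcsin (w (π / 2)) = π / 2 := by
    have : w (π / 2) = 1 := by
      rw [hw_def]; simp; field_simp
      exact hk1'.ne'
    rw [this, Real.arcsin_one]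
  simp only [Function.comp_apply] at key
  rw [hφ0, hφ1] at key
  rw [show ellipticE (2 * Real.sqrt k / (1 + k)) = ∫ u in (0:ℝ)..(π / 2), g u from rfl]
  rw [← key]
  apply integral_congr
  intro θ hθ
  rw [Set.uIcc_of_le hπ.le] at hθ
  have hs0 : 0 ≤ Real.sin θ :=
    Real.sin_nonneg_of_nonneg_of_le_pi hθ.1 (by linarith [hθ.2, Real.pi_pos])
  have hs1 : Real.sin θ ≤ 1 := Real.sin_le_one θ
  have hqx := hq hk0 θ
  have hΔx := hDelta hk0 hk1 θ
  have hksx := hks hk0 hk1 θ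
  have hΔsx : 0 < Real.sqrt (1 - k ^ 2 * Real.sin θ ^ 2) := Real.sqrt_pos.2 hΔx
  have hw0 : 0 ≤ w θ := by rw [hw_def]; positivity
  have hks1 : k * Real.sin θ ≤ 1 := le_trans (mul_le_of_le_one_right hk0 hs1) hk1.le
  have hw1 : w θ ≤ 1 := by
    rw [hw_def, div_le_one hqx]
    nlinarith [mul_nonneg (sub_nonneg.2 hs1) (sub_nonneg.2 hks1)]
  have hgv : g (Real.arcsin (w θ)) = (1 - k * Real.sin θ ^ 2) / (1 + k * Real.sin θ ^ 2) := by
    rw [hg_def]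
    simp only
    rw [Real.sin_arcsin (by linarith) hw1]
    rw [show 1 - (2 * Real.sqrt k / (1 + k)) ^ 2 * w θ ^ 2
        = ((1 - k * Real.sin θ ^ 2) / (1 + k * Real.sin θ ^ 2)) ^ 2 by
      have hk : Real.sqrt k ^ 2 = k := Real.sq_sqrt hk0
      rw [hw_def]
      field_simp
      linear_combination (-4 * Real.sin θ ^ 2) * hk]
    exact Real.sqrt_sq (by positivity)
  show f' θ • (g (Real.arcsin (w θ))) = _
  rw [hgv, hf'_def, smul_eq_mul]
  field_simp

lemma corr_deriv (hk0 : 0 ≤ k) (hk1 : k < 1) (θ : ℝ) :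
    HasDerivAt (fun t => -2 * k * Real.sin t * Real.cos t *
        Real.sqrt (1 - k ^ 2 * Real.sin t ^ 2) / (1 + k * Real.sin t ^ 2))
      (2 * Real.sqrt (1 - k ^ 2 * Real.sin θ ^ 2)
        - (1 - k ^ 2) * (1 / Real.sqrt (1 - k ^ 2 * Real.sin θ ^ 2))
        - (1 + k) * ((1 + k) * (1 - k * Real.sin θ ^ 2) ^ 2 /
            ((1 + k * Real.sin θ ^ 2) ^ 2 * Real.sqrt (1 - k ^ 2 * Real.sin θ ^ 2)))) θ := by
  have hΔx := hDelta hk0 hk1 θ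
  have hqx := hq hk0 θ
  have hΔsx : 0 < Real.sqrt (1 - k ^ 2 * Real.sin θ ^ 2) := Real.sqrt_pos.2 hΔx
  have hinner : HasDerivAt (fun t : ℝ => 1 - k ^ 2 * Real.sin t ^ 2)
      (-(k ^ 2 * (2 * Real.sin θ ^ 1 * Real.cos θ))) θ :=
    (((Real.hasDerivAt_sin θ).pow 2).const_mul (k ^ 2)).const_sub 1
  have hΔd := hinner.sqrt hΔx.ne'
  have hqd : HasDerivAt (fun t : ℝ => 1 + k * Real.sin t ^ 2)
      (k * (2 * Real.sin θ ^ 1 * Real.cos θ)) θ :=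
    (((Real.hasDerivAt_sin θ).pow 2).const_mul k).const_add 1
  have hnum := (((Real.hasDerivAt_sin θ).const_mul (-2 * k)).mul
      (Real.hasDerivAt_cos θ)).mul hΔd
  have hF := hnum.div hqd hqx.ne'
  refine HasDerivAt.congr_deriv hF ?_
  symm
  have hS2 : Real.sqrt (1 - k ^ 2 * Real.sin θ ^ 2) ^ 2 = 1 - k ^ 2 * Real.sin θ ^ 2 :=
    Real.sq_sqrt hΔx.le
  have hc2 : Real.cos θ ^ 2 = 1 - Real.sin θ ^ 2 := Real.cos_sq' θ
  simp only [Pi.mul_apply]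
  set S := Real.sqrt (1 - k ^ 2 * Real.sin θ ^ 2) with hS_def
  field_simp
  ring_nf
  simp only [hS2, hc2]
  ring

lemma landen_E (hk0 : 0 ≤ k) (hk1 : k < 1) :
    (1 + k) * ellipticE (2 * Real.sqrt k / (1 + k))
      = 2 * ellipticE k - (1 - k ^ 2) * ellipticK k := by
  have hΔc : Continuous fun t : ℝ => Real.sqrt (1 - k ^ 2 * Real.sin t ^ 2) :=
    (continuous_const.sub (continuous_const.mul ((Real.continuous_sin).pow 2))).sqrt
  have hΔne : ∀ t : ℝ, Real.sqrt (1 - k ^ 2 * Real.sin t ^ 2) ≠ 0 := fun t =>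
    (Real.sqrt_pos.2 (hDelta hk0 hk1 t)).ne'
  have hKc : Continuous fun t : ℝ => 1 / Real.sqrt (1 - k ^ 2 * Real.sin t ^ 2) :=
    continuous_const.div hΔc hΔne
  have hqc : Continuous fun t : ℝ => 1 + k * Real.sin t ^ 2 :=
    continuous_const.add (continuous_const.mul ((Real.continuous_sin).pow 2))
  have hhc : Continuous fun t : ℝ => (1 + k) * (1 - k * Real.sin t ^ 2) ^ 2 /
      ((1 + k * Real.sin t ^ 2) ^ 2 * Real.sqrt (1 - k ^ 2 * Real.sin t ^ 2)) := by
    apply Continuous.div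
    · exact continuous_const.mul
        ((continuous_const.sub (continuous_const.mul ((Real.continuous_sin).pow 2))).pow 2)
    · exact (hqc.pow 2).mul hΔc
    · intro t
      exact (mul_pos (pow_pos (hq hk0 t) 2) (Real.sqrt_pos.2 (hDelta hk0 hk1 t))).ne'
  have hDc : Continuous fun t : ℝ =>
      2 * Real.sqrt (1 - k ^ 2 * Real.sin t ^ 2)
        - (1 - k ^ 2) * (1 / Real.sqrt (1 - k ^ 2 * Real.sin t ^ 2))
        - (1 + k) * ((1 + k) * (1 - k * Real.sin t ^ 2) ^ 2 /
            ((1 + k * Real.sin t ^ 2) ^ 2 * Real.sqrt (1 - k ^ 2 * Real.sin t ^ 2))) :=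
    ((continuous_const.mul hΔc).sub (continuous_const.mul hKc)).sub (continuous_const.mul hhc)
  have hzero : (∫ t in (0:ℝ)..(π / 2),
      (2 * Real.sqrt (1 - k ^ 2 * Real.sin t ^ 2)
        - (1 - k ^ 2) * (1 / Real.sqrt (1 - k ^ 2 * Real.sin t ^ 2))
        - (1 + k) * ((1 + k) * (1 - k * Real.sin t ^ 2) ^ 2 /
            ((1 + k * Real.sin t ^ 2) ^ 2 * Real.sqrt (1 - k ^ 2 * Real.sin t ^ 2))))) = 0 := by
    rw [intervalIntegral.integral_eq_sub_of_hasDerivAt (fun t _ => corr_deriv hk0 hk1 t)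
      (hDc.intervalIntegrable _ _)]
    simp [Real.cos_pi_div_two]
  have h1 : IntervalIntegrable (fun t : ℝ => 2 * Real.sqrt (1 - k ^ 2 * Real.sin t ^ 2))
      MeasureTheory.volume 0 (π / 2) := (continuous_const.mul hΔc).intervalIntegrable _ _
  have h2 : IntervalIntegrable
      (fun t : ℝ => (1 - k ^ 2) * (1 / Real.sqrt (1 - k ^ 2 * Real.sin t ^ 2)))
      MeasureTheory.volume 0 (π / 2) := (continuous_const.mul hKc).intervalIntegrable _ _
  have h3 : IntervalIntegrable (fun t : ℝ => (1 + k) * ((1 + k) * (1 - k * Real.sin t ^ 2) ^ 2 /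
      ((1 + k * Real.sin t ^ 2) ^ 2 * Real.sqrt (1 - k ^ 2 * Real.sin t ^ 2))))
      MeasureTheory.volume 0 (π / 2) := (continuous_const.mul hhc).intervalIntegrable _ _
  rw [intervalIntegral.integral_sub (h1.sub h2) h3, intervalIntegral.integral_sub h1 h2,
    intervalIntegral.integral_const_mul, intervalIntegral.integral_const_mul,
    intervalIntegral.integral_const_mul] at hzero
  rw [subst_E hk0 hk1]
  rw [ellipticE, ellipticK]
  linarith [hzero]

end landen_aux

/-- Equality of the analytic and Landen's synthetic determination of the limit
hyperbolic excess of the hyperbola `x²/a² − y²/b² = 1`. -/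
theorem landen_maclaurin_excess_identity (a b : ℝ) (hb : 0 < b) (hab : b ≤ a) :
    2 * Real.sqrt (a ^ 2 + b ^ 2) * ellipticE (a / Real.sqrt (a ^ 2 + b ^ 2))
      - (Real.sqrt (a ^ 2 + b ^ 2) + a) *
        ellipticE (2 * Real.sqrt (a * Real.sqrt (a ^ 2 + b ^ 2)) /
          (a + Real.sqrt (a ^ 2 + b ^ 2)))
      = b ^ 2 / Real.sqrt (a ^ 2 + b ^ 2) *
          ellipticK (a / Real.sqrt (a ^ 2 + b ^ 2)) := by
  have ha : 0 < a := lt_of_lt_of_le hb hab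
  set c := Real.sqrt (a ^ 2 + b ^ 2) with hc_def
  have hc2 : c ^ 2 = a ^ 2 + b ^ 2 := Real.sq_sqrt (by positivity)
  have hcpos : 0 < c := Real.sqrt_pos.2 (by positivity)
  have hac : a < c := by nlinarith
  have hk0 : 0 ≤ a / c := by positivity
  have hk1 : a / c < 1 := (div_lt_one hcpos).2 hac
  have h1 : Real.sqrt (a / c) = Real.sqrt (a * c) / c := by
    rw [show a / c = a * c / c ^ 2 by field_simp]
    rw [Real.sqrt_div (by positivity), Real.sqrt_sq hcpos.le]
  have harg : 2 * Real.sqrt (a * c) / (a + c) = 2 * Real.sqrt (a / c) / (1 + a / c) := by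
    rw [h1]
    rw [show (1 : ℝ) + a / c = (c + a) / c by field_simp]
    field_simp
    ring
  have hL := landen_E hk0 hk1
  have hb2 : b ^ 2 = c ^ 2 - a ^ 2 := by linarith
  have key : (c + a) * ellipticE (2 * Real.sqrt (a * c) / (a + c))
      = 2 * c * ellipticE (a / c) - b ^ 2 / c * ellipticK (a / c) := by
    rw [harg, show (c + a) = c * (1 + a / c) by field_simp, mul_assoc, hL, hb2]
    field_simp
  rw [key]
  ring
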